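/- arXiv:2108.07475 — 2 statements merged into one kernel-verified Lean document; each statement's English description precedes it below -/
import Mathlib

section
/- Let H(x,y) = (y, y² − a·x) with a ≠ 0, and let ω ∈ ℂ satisfy ω³ = 1. Define the linear map L_ω(x,y) = (ω·x, ω²·y). Then G⁺_H ∘ L_ω = G⁺_H on all of ℂ², and consequently, for every c > 0, L_ω maps Ω_c onto Ω_c, i.e. L_ω restricts to a holomorphic automorphism of Ω_c. -/
open Filter Topology Set

noncomputable section

/-- `f : U → V` and `g : V → U` are mutually inverse holomorphic maps, i.e.
`f` is a biholomorphism from `U` onto `V` with inverse `g`. -/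
def IsBiholoOn (f g : ℂ × ℂ → ℂ × ℂ) (U V : Set (ℂ × ℂ)) : Prop :=
  DifferentiableOn ℂ f U ∧ DifferentiableOn ℂ g V ∧
    Set.MapsTo f U V ∧ Set.MapsTo g V U ∧
    (∀ z ∈ U, g (f z) = z) ∧ (∀ w ∈ V, f (g w) = w)

/-- For the Hénon map `H(x,y) = (y, y² - a·x)` with `a ≠ 0` and a cube
root of unity `ω`, the linear map `L_ω(x,y) = (ω·x, ω²·y)` satisfies
`G⁺_H ∘ L_ω = G⁺_H` on all of `ℂ²`, and for every `c > 0`, `L_ω` maps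
`Ω_c = {G⁺_H < c}` onto itself and restricts to a holomorphic automorphism of `Ω_c`. -/
theorem stmt_0 (a : ℂ) (ha : a ≠ 0) (ω : ℂ) (hω : ω ^ 3 = 1)
    (H : ℂ × ℂ → ℂ × ℂ) (hH : ∀ z : ℂ × ℂ, H z = (z.2, z.2 ^ 2 - a * z.1))
    (G : ℂ × ℂ → ℝ) (hGcont : Continuous G) (hGnonneg : ∀ z, 0 ≤ G z)
    (hGlim : ∀ z : ℂ × ℂ,
      Tendsto (fun n : ℕ => Real.log (max ‖H^[n] z‖ 1) / (2 : ℝ) ^ n) atTop (𝓝 (G z)))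
    (L : ℂ × ℂ → ℂ × ℂ) (hL : ∀ z : ℂ × ℂ, L z = (ω * z.1, ω ^ 2 * z.2)) :
    (∀ z : ℂ × ℂ, G (L z) = G z) ∧
    ∀ c : ℝ, 0 < c →
      L '' {z : ℂ × ℂ | G z < c} = {z : ℂ × ℂ | G z < c} ∧
      ∃ M : ℂ × ℂ → ℂ × ℂ,
        IsBiholoOn L M {z : ℂ × ℂ | G z < c} {z : ℂ × ℂ | G z < c} := by
  -- |ω| = 1
  have hω0 : ω ≠ 0 := by
    intro h; rw [h] at hω; simp at hω
  have habs : ‖ω‖ = 1 := by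
    have h3 : ‖ω‖ ^ 3 = 1 := by
      rw [← norm_pow, hω, norm_one]
    nlinarith [norm_nonneg ω, sq_nonneg (‖ω‖ - 1), sq_nonneg (‖ω‖ + 1)]
  -- L preserves norms
  have hnorm : ∀ w : ℂ × ℂ, ‖L w‖ = ‖w‖ := by
    intro w
    rw [hL]
    simp [Prod.norm_def, norm_mul, norm_pow, habs]
  -- key commutation: H² ∘ L = L ∘ H²
  have hkey : ∀ w : ℂ × ℂ, H (H (L w)) = L (H (H w)) := by
    intro w
    simp only [hH, hL]
    refine Prod.ext ?_ ?_
    · simp only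
      linear_combination (ω * w.2 ^ 2) * hω
    · simp only
      linear_combination (ω ^ 2 * (ω ^ 3 + 1) * w.2 ^ 4 - 2 * a * ω ^ 2 * w.1 * w.2 ^ 2) * hω
  have comm : ∀ (n : ℕ) (z : ℂ × ℂ), H^[2 * n] (L z) = L (H^[2 * n] z) := by
    intro n
    induction n with
    | zero => intro z; simp
    | succ n ih =>
      intro z
      have h1 : 2 * (n + 1) = 2 + 2 * n := by ring
      rw [h1, Function.iterate_add_apply, Function.iterate_add_apply, ih z]
      show H (H (L (H^[2*n] z))) = L (H (H (H^[2*n] z)))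
      exact hkey _
  -- G ∘ L = G
  have ht : Tendsto (fun n : ℕ => 2 * n) atTop atTop :=
    tendsto_atTop_atTop.2 fun b => ⟨b, fun n hn => by omega⟩
  have hGL : ∀ z : ℂ × ℂ, G (L z) = G z := by
    intro z
    have h1 := (hGlim (L z)).comp ht
    have h2 := (hGlim z).comp ht
    have h1' : Tendsto (fun n : ℕ => Real.log (max ‖H^[2 * n] z‖ 1) / (2 : ℝ) ^ (2 * n))
        atTop (𝓝 (G (L z))) := by
      refine h1.congr fun n => ?_
      simp only [Function.comp]
      rw [comm n z, hnorm]
    exact tendsto_nhds_unique h1' h2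
  refine ⟨hGL, fun c hc => ?_⟩
  -- L∘L∘L = id
  have hLLL : ∀ z : ℂ × ℂ, L (L (L z)) = z := by
    intro z
    simp only [hL]
    refine Prod.ext ?_ ?_
    · simp only
      linear_combination z.1 * hω
    · simp only
      linear_combination (ω ^ 3 + 1) * z.2 * hω
  set M : ℂ × ℂ → ℂ × ℂ := fun z => L (L z) with hM
  have hGM : ∀ z : ℂ × ℂ, G (M z) = G z := by
    intro z; rw [hM]; simp only; rw [hGL, hGL]
  have hML : ∀ z : ℂ × ℂ, M (L z) = z := fun z => hLLL z
  have hLM : ∀ z : ℂ × ℂ, L (M z) = z := fun z => hLLL z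
  have hLdiff : Differentiable ℂ L := by
    have : L = fun z : ℂ × ℂ => (ω * z.1, ω ^ 2 * z.2) := funext hL
    rw [this]
    exact ((differentiable_fst.const_mul ω).prodMk (differentiable_snd.const_mul (ω ^ 2)))
  have hMdiff : Differentiable ℂ M := hLdiff.comp hLdiff
  constructor
  · ext z
    simp only [mem_image, mem_setOf_eq]
    constructor
    · rintro ⟨w, hw, rfl⟩
      rwa [hGL]
    · intro hz
      exact ⟨M z, show G (M z) < c by rw [hGM z]; exact hz, hLM z⟩
  · refine ⟨M, hLdiff.differentiableOn, hMdiff.differentiableOn, ?_, ?_, ?_, ?_⟩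
    · intro z hz; simp only [mem_setOf_eq] at *; rwa [hGL]
    · intro z hz; simp only [mem_setOf_eq] at *; rwa [hGM]
    · intro z _; exact hML z
    · intro z _; exact hLM z
end
end

section
/- For every c > 0, the punctured Short ℂ², Ω'_c = {z ∈ ℂ² : 0 < G⁺_H(z) < c}, is path-connected. -/
open Filter Topology Set

noncomputable section

lemma stmt2_joinedIn_image {X Y : Type*} [TopologicalSpace X] [TopologicalSpace Y]
    {s : Set X} {x y : X} (h : JoinedIn s x y) {f : X → Y} (hf : Continuous f) :
    JoinedIn (f '' s) (f x) (f y) := by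
  obtain ⟨γ, hγ⟩ := h
  exact ⟨γ.map hf, fun t => ⟨γ t, hγ t, rfl⟩⟩

lemma stmt2_polyBound (d : ℕ) (hd : 2 ≤ d) (a : ℂ)
    (p : Polynomial ℂ) (hpm : p.Monic) (hpd : p.natDegree = d) (x y : ℂ)
    (h1 : 1 ≤ ‖y‖) (hxy : ‖x‖ ≤ ‖y‖) :
    ‖p.eval y - a * x - y ^ d‖
      ≤ (1 + ‖a‖ + ∑ i ∈ Finset.range d, ‖p.coeff i‖) * ‖y‖ ^ (d - 1) := by
  have heval : p.eval y = (∑ i ∈ Finset.range d, p.coeff i * y ^ i) + y ^ d := by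
    have h := Polynomial.eval_eq_sum_range (p := p) y
    rw [hpd] at h
    rw [h, Finset.sum_range_succ]
    have : p.coeff d = 1 := by
      have := hpm.coeff_natDegree
      rwa [hpd] at this
    rw [this, one_mul]
  have key : p.eval y - a * x - y ^ d = (∑ i ∈ Finset.range d, p.coeff i * y ^ i) - a * x := by
    rw [heval]; ring
  rw [key]
  have hyp : (0:ℝ) ≤ ‖y‖ ^ (d - 1) := by positivity
  have hsum : ‖∑ i ∈ Finset.range d, p.coeff i * y ^ i‖
      ≤ (∑ i ∈ Finset.range d, ‖p.coeff i‖) * ‖y‖ ^ (d - 1) := by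
    calc ‖∑ i ∈ Finset.range d, p.coeff i * y ^ i‖
        ≤ ∑ i ∈ Finset.range d, ‖p.coeff i * y ^ i‖ := norm_sum_le _ _
      _ ≤ ∑ i ∈ Finset.range d, ‖p.coeff i‖ * ‖y‖ ^ (d - 1) := by
          apply Finset.sum_le_sum
          intro i hi
          rw [norm_mul, norm_pow]
          have : ‖y‖ ^ i ≤ ‖y‖ ^ (d - 1) :=
            pow_le_pow_right₀ h1 (by have := Finset.mem_range.mp hi; omega)
          exact mul_le_mul_of_nonneg_left this (norm_nonneg _)
      _ = (∑ i ∈ Finset.range d, ‖p.coeff i‖) * ‖y‖ ^ (d - 1) := by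
          rw [Finset.sum_mul]
  have hax : ‖a * x‖ ≤ ‖a‖ * ‖y‖ ^ (d - 1) := by
    rw [norm_mul]
    have hy' : ‖y‖ ≤ ‖y‖ ^ (d - 1) := by
      calc ‖y‖ = ‖y‖ ^ 1 := (pow_one _).symm
        _ ≤ ‖y‖ ^ (d - 1) := pow_le_pow_right₀ h1 (by omega)
    exact mul_le_mul_of_nonneg_left (hxy.trans hy') (norm_nonneg _)
  calc ‖(∑ i ∈ Finset.range d, p.coeff i * y ^ i) - a * x‖
      ≤ ‖∑ i ∈ Finset.range d, p.coeff i * y ^ i‖ + ‖a * x‖ := norm_sub_le _ _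
    _ ≤ (∑ i ∈ Finset.range d, ‖p.coeff i‖) * ‖y‖ ^ (d - 1) + ‖a‖ * ‖y‖ ^ (d - 1) := by
        linarith
    _ ≤ (1 + ‖a‖ + ∑ i ∈ Finset.range d, ‖p.coeff i‖) * ‖y‖ ^ (d - 1) := by nlinarith

lemma stmt2_W_pathConnected (R T : ℝ) (hR : 1 ≤ R) (hRT : Real.log R ≤ T) :
    IsPathConnected {w : ℂ × ℂ | (‖w.1‖ ≤ ‖w.2‖ ∧ R ≤ ‖w.2‖) ∧ Real.log ‖w.2‖ ≤ T} := by
  set S : Set (ℂ × ℂ) := {w : ℂ × ℂ | (‖w.1‖ ≤ ‖w.2‖ ∧ R ≤ ‖w.2‖) ∧ Real.log ‖w.2‖ ≤ T}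
    with hS
  have hmem : ∀ w : ℂ × ℂ, (‖w.1‖ ≤ ‖w.2‖ ∧ R ≤ ‖w.2‖) ∧ Real.log ‖w.2‖ ≤ T → w ∈ S :=
    fun w h => h
  have hR0 : (0:ℝ) < R := lt_of_lt_of_le one_pos hR
  have hnormR : ‖((R:ℂ))‖ = R := by
    rw [Complex.norm_real, Real.norm_eq_abs, abs_of_pos hR0]
  have hbase : ((0:ℂ), (R:ℂ)) ∈ S := by
    refine hmem _ ⟨⟨?_, ?_⟩, ?_⟩
    · rw [hnormR]; simpa using hR0.le
    · rw [hnormR]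
    · rw [hnormR]; exact hRT
  refine ⟨((0:ℂ), (R:ℂ)), hbase, ?_⟩
  intro z hz
  obtain ⟨⟨hz1, hz2⟩, hz3⟩ := hz
  have hz2pos : (0:ℝ) < ‖z.2‖ := lt_of_lt_of_le hR0 hz2
  -- step 1 : z to (0, z.2)
  have j1 : JoinedIn S z ((0:ℂ), z.2) := by
    refine ⟨⟨⟨fun t => ((((1:ℝ) - (t:ℝ)) • z.1 : ℂ), z.2), by fun_prop⟩, by simp, by simp⟩, ?_⟩
    intro t
    refine hmem _ ⟨⟨?_, hz2⟩, hz3⟩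
    have h01 : (0:ℝ) ≤ (t:ℝ) := t.2.1
    have h11 : (t:ℝ) ≤ 1 := t.2.2
    have habs : |(1:ℝ) - (t:ℝ)| ≤ 1 := by rw [abs_of_nonneg (by linarith)]; linarith
    show ‖((1:ℝ) - (t:ℝ)) • z.1‖ ≤ ‖z.2‖
    rw [norm_smul, Real.norm_eq_abs]
    calc |(1:ℝ) - (t:ℝ)| * ‖z.1‖ ≤ 1 * ‖z.1‖ :=
          mul_le_mul_of_nonneg_right habs (norm_nonneg _)
      _ = ‖z.1‖ := one_mul _
      _ ≤ ‖z.2‖ := hz1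
  -- step 2 : (0, z.2) to (0, (R/‖z.2‖) • z.2)
  set r : ℝ := R / ‖z.2‖ with hr
  have hr0 : 0 < r := div_pos hR0 hz2pos
  have hr1 : r ≤ 1 := (div_le_one hz2pos).mpr hz2
  have hrR : r * ‖z.2‖ = R := div_mul_cancel₀ _ (ne_of_gt hz2pos)
  have hrnorm : ‖r • z.2‖ = R := by
    rw [norm_smul, Real.norm_eq_abs, abs_of_pos hr0, hrR]
  have j2 : JoinedIn S ((0:ℂ), z.2) ((0:ℂ), r • z.2) := by
    refine ⟨⟨⟨fun t => ((0:ℂ), (((1:ℝ) - (t:ℝ) * (1 - r)) • z.2 : ℂ)), by fun_prop⟩,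
      by simp, by norm_num⟩, ?_⟩
    intro t
    have h01 : (0:ℝ) ≤ (t:ℝ) := t.2.1
    have h11 : (t:ℝ) ≤ 1 := t.2.2
    have hs1 : r ≤ (1:ℝ) - (t:ℝ) * (1 - r) := by nlinarith
    have hs2 : (1:ℝ) - (t:ℝ) * (1 - r) ≤ 1 := by nlinarith
    have hspos : (0:ℝ) < (1:ℝ) - (t:ℝ) * (1 - r) := lt_of_lt_of_le hr0 hs1
    have hnorm : ‖((1:ℝ) - (t:ℝ) * (1 - r)) • z.2‖ = ((1:ℝ) - (t:ℝ) * (1 - r)) * ‖z.2‖ := by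
      rw [norm_smul, Real.norm_eq_abs, abs_of_pos hspos]
    have hge : R ≤ ((1:ℝ) - (t:ℝ) * (1 - r)) * ‖z.2‖ := by
      calc R = r * ‖z.2‖ := hrR.symm
        _ ≤ _ := mul_le_mul_of_nonneg_right hs1 hz2pos.le
    have hle : ((1:ℝ) - (t:ℝ) * (1 - r)) * ‖z.2‖ ≤ ‖z.2‖ := by nlinarith
    refine hmem _ ⟨⟨?_, ?_⟩, ?_⟩
    · show ‖(0:ℂ)‖ ≤ ‖((1:ℝ) - (t:ℝ) * (1 - r)) • z.2‖
      rw [hnorm, norm_zero]; exact le_trans hR0.le hge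
    · show R ≤ ‖((1:ℝ) - (t:ℝ) * (1 - r)) • z.2‖
      rw [hnorm]; exact hge
    · show Real.log ‖((1:ℝ) - (t:ℝ) * (1 - r)) • z.2‖ ≤ T
      rw [hnorm]
      calc Real.log (((1:ℝ) - (t:ℝ) * (1 - r)) * ‖z.2‖)
          ≤ Real.log ‖z.2‖ := Real.log_le_log (by positivity) hle
        _ ≤ T := hz3
  -- step 3 : (0, r • z.2) to (0, R) along the sphere of radius R
  have j3 : JoinedIn S ((0:ℂ), r • z.2) ((0:ℂ), (R:ℂ)) := by
    have hsph : IsPathConnected (Metric.sphere (0:ℂ) R) := by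
      apply isPathConnected_sphere ?_ (0:ℂ) hR0.le
      rw [Complex.rank_real_complex]; exact Cardinal.one_lt_two
    have hm1 : r • z.2 ∈ Metric.sphere (0:ℂ) R := by
      rw [Metric.mem_sphere, dist_zero_right, hrnorm]
    have hm2 : (R:ℂ) ∈ Metric.sphere (0:ℂ) R := by
      rw [Metric.mem_sphere, dist_zero_right, hnormR]
    have hj := hsph.joinedIn _ hm1 _ hm2
    have himg := stmt2_joinedIn_image hj (f := fun w : ℂ => ((0:ℂ), w))
      (continuous_const.prodMk continuous_id)
    apply himg.mono
    rintro w ⟨v, hv, rfl⟩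
    have hvnorm : ‖v‖ = R := by rwa [Metric.mem_sphere, dist_zero_right] at hv
    refine hmem _ ⟨⟨?_, ?_⟩, ?_⟩
    · show ‖(0:ℂ)‖ ≤ ‖v‖
      rw [norm_zero, hvnorm]; exact hR0.le
    · show R ≤ ‖v‖
      rw [hvnorm]
    · show Real.log ‖v‖ ≤ T
      rw [hvnorm]; exact hRT
  exact ((j1.trans j2).trans j3).symm

set_option maxHeartbeats 2000000 in
/-- For every `c > 0`, the punctured Short ℂ²,
`Ω'_c = {z ∈ ℂ² : 0 < G⁺_H(z) < c}`, is path-connected. -/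
theorem stmt_2 (d : ℕ) (hd : 2 ≤ d) (a : ℂ) (ha : a ≠ 0)
    (p : Polynomial ℂ) (hpm : p.Monic) (hpd : p.natDegree = d)
    (hpc : p.coeff (d - 1) = 0)
    (H : ℂ × ℂ → ℂ × ℂ) (hH : ∀ z : ℂ × ℂ, H z = (z.2, p.eval z.2 - a * z.1))
    (G : ℂ × ℂ → ℝ) (hGcont : Continuous G) (hGnonneg : ∀ z, 0 ≤ G z)
    (hGlim : ∀ z : ℂ × ℂ,
      Tendsto (fun n : ℕ => Real.log (max ‖H^[n] z‖ 1) / (d : ℝ) ^ n) atTop (𝓝 (G z)))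
    (c : ℝ) (hc : 0 < c) :
    IsPathConnected {z : ℂ × ℂ | 0 < G z ∧ G z < c} := by
  have hd2 : (2:ℝ) ≤ (d:ℝ) := by exact_mod_cast hd
  have hd0 : (0:ℝ) < (d:ℝ) := by linarith
  have hd1 : (1:ℝ) < (d:ℝ) := by linarith
  set C : ℝ := 1 + ‖a‖ + ∑ i ∈ Finset.range d, ‖p.coeff i‖ with hC
  have hC1 : 1 ≤ C := by
    have h1 : (0:ℝ) ≤ ‖a‖ := norm_nonneg _
    have h2 : (0:ℝ) ≤ ∑ i ∈ Finset.range d, ‖p.coeff i‖ :=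
      Finset.sum_nonneg fun i _ => norm_nonneg _
    rw [hC]; linarith
  set R : ℝ := max (4*C) (Real.exp 2) with hRdef
  have hR4C : 4*C ≤ R := le_max_left _ _
  have hRe : Real.exp 2 ≤ R := le_max_right _ _
  have hR4 : 4 ≤ R := le_trans (by linarith) hR4C
  have hR1 : 1 ≤ R := by linarith
  have hR0 : 0 < R := by linarith
  have hlogR : 2 ≤ Real.log R := by
    calc (2:ℝ) = Real.log (Real.exp 2) := (Real.log_exp 2).symm
      _ ≤ Real.log R := Real.log_le_log (Real.exp_pos 2) hRe
  set V : Set (ℂ × ℂ) := {w : ℂ × ℂ | ‖w.1‖ ≤ ‖w.2‖ ∧ R ≤ ‖w.2‖} with hV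
  -- basic norm estimates for one application of H on V
  have hkey : ∀ w ∈ V, (3/4) * ‖w.2‖^d ≤ ‖(H w).2‖ ∧ ‖(H w).2‖ ≤ (5/4) * ‖w.2‖^d := by
    rintro w ⟨hw1, hw2⟩
    have hy1 : 1 ≤ ‖w.2‖ := le_trans hR1 hw2
    have hbd := stmt2_polyBound d hd a p hpm hpd w.1 w.2 hy1 hw1
    rw [← hC] at hbd
    have hyd : ‖w.2‖^d = ‖w.2‖^(d-1) * ‖w.2‖ := by
      rw [← pow_succ]; congr 1; omega
    have hpow0 : (0:ℝ) ≤ ‖w.2‖^(d-1) := by positivity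
    have h4 : C * ‖w.2‖^(d-1) ≤ (1/4) * ‖w.2‖^d := by
      rw [hyd]
      nlinarith [le_trans hR4C hw2]
    have hHw2 : (H w).2 = p.eval w.2 - a*w.1 := by rw [hH]
    have hE : p.eval w.2 - a*w.1 = w.2^d + (p.eval w.2 - a*w.1 - w.2^d) := by ring
    have hnp : ‖(w.2:ℂ)^d‖ = ‖w.2‖^d := norm_pow _ _
    have ht1 : ‖(H w).2‖ ≤ ‖w.2‖^d + C*‖w.2‖^(d-1) := by
      rw [hHw2]
      calc ‖p.eval w.2 - a*w.1‖ = ‖w.2^d + (p.eval w.2 - a*w.1 - w.2^d)‖ := by rw [← hE]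
        _ ≤ ‖(w.2:ℂ)^d‖ + ‖p.eval w.2 - a*w.1 - w.2^d‖ := norm_add_le _ _
        _ ≤ ‖w.2‖^d + C*‖w.2‖^(d-1) := by rw [hnp]; linarith
    have ht2 : ‖w.2‖^d - C*‖w.2‖^(d-1) ≤ ‖(H w).2‖ := by
      rw [hHw2]
      have : ‖(w.2:ℂ)^d‖ ≤ ‖p.eval w.2 - a*w.1‖ + ‖p.eval w.2 - a*w.1 - w.2^d‖ := by
        calc ‖(w.2:ℂ)^d‖ = ‖(p.eval w.2 - a*w.1) - (p.eval w.2 - a*w.1 - w.2^d)‖ := by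
              congr 1; ring
          _ ≤ _ := norm_sub_le _ _
      rw [hnp] at this; linarith
    exact ⟨by nlinarith [ht2, h4], by nlinarith [ht1, h4]⟩
  have hVstep : ∀ w ∈ V, H w ∈ V := by
    intro w hw
    obtain ⟨hw1, hw2⟩ := hw
    obtain ⟨hlo, hhi⟩ := hkey w ⟨hw1, hw2⟩
    have hy4 : 4 ≤ ‖w.2‖ := le_trans hR4 hw2
    have h2d : ‖w.2‖^2 ≤ ‖w.2‖^d := pow_le_pow_right₀ (by linarith) hd
    have hy2 : 4 * ‖w.2‖ ≤ ‖w.2‖^d := by nlinarith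
    have hge : 3*‖w.2‖ ≤ ‖(H w).2‖ := by nlinarith
    have hw2' : (H w).1 = w.2 := by rw [hH]
    constructor
    · rw [hw2']; show ‖w.2‖ ≤ ‖(H w).2‖; linarith
    · show R ≤ ‖(H w).2‖; linarith
  have hlogstep : ∀ w ∈ V, (d:ℝ) * Real.log ‖w.2‖ - 1 ≤ Real.log ‖(H w).2‖ ∧
      Real.log ‖(H w).2‖ ≤ (d:ℝ) * Real.log ‖w.2‖ + 1 := by
    intro w hw
    obtain ⟨hlo, hhi⟩ := hkey w hw
    have hy0 : 0 < ‖w.2‖ := lt_of_lt_of_le hR0 hw.2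
    have hyd0 : (0:ℝ) < ‖w.2‖^d := by positivity
    have hE0 : 0 < ‖(H w).2‖ := lt_of_lt_of_le (by positivity) hlo
    have hlog54 : Real.log (5/4) ≤ 1 := by
      have := Real.log_le_sub_one_of_pos (x := (5/4:ℝ)) (by norm_num)
      linarith
    have hlog34 : -1 ≤ Real.log (3/4) := by
      have h43 : Real.log (4/3) ≤ 1/3 := by
        have := Real.log_le_sub_one_of_pos (x := (4/3:ℝ)) (by norm_num)
        linarith
      have : Real.log (3/4) = - Real.log (4/3) := by
        rw [← Real.log_inv]; norm_num
      linarith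
    have hlogpow : Real.log (‖w.2‖^d) = (d:ℝ) * Real.log ‖w.2‖ := by
      rw [Real.log_pow]
    constructor
    · calc (d:ℝ) * Real.log ‖w.2‖ - 1 ≤ Real.log (3/4) + (d:ℝ) * Real.log ‖w.2‖ := by linarith
        _ = Real.log ((3/4) * ‖w.2‖^d) := by
            rw [Real.log_mul (by norm_num) (ne_of_gt hyd0), hlogpow]
        _ ≤ Real.log ‖(H w).2‖ := Real.log_le_log (by positivity) hlo
    · calc Real.log ‖(H w).2‖ ≤ Real.log ((5/4) * ‖w.2‖^d) := Real.log_le_log hE0 hhi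
        _ = Real.log (5/4) + (d:ℝ) * Real.log ‖w.2‖ := by
            rw [Real.log_mul (by norm_num) (ne_of_gt hyd0), hlogpow]
        _ ≤ (d:ℝ) * Real.log ‖w.2‖ + 1 := by linarith
  have hViter : ∀ w ∈ V, ∀ n : ℕ, H^[n] w ∈ V := by
    intro w hw n
    induction n with
    | zero => simpa using hw
    | succ n ih => rw [Function.iterate_succ_apply']; exact hVstep _ ih
  have hnormV : ∀ w ∈ V, max ‖w‖ 1 = ‖w.2‖ := by
    rintro w ⟨hw1, hw2⟩
    rw [Prod.norm_def, max_eq_right hw1, max_eq_left (le_trans hR1 hw2)]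
  -- Claim A : |G w - log ‖w.2‖| ≤ 1 on V
  have hGA : ∀ w ∈ V, |G w - Real.log ‖w.2‖| ≤ 1 := by
    intro w hw
    set L : ℕ → ℝ := fun n => Real.log ‖(H^[n] w).2‖ with hL
    have key : ∀ n : ℕ, |L n - (d:ℝ)^n * L 0| ≤ (d:ℝ)^n - 1 := by
      intro n
      induction n with
      | zero => simp
      | succ n ih =>
        have hwn : H^[n] w ∈ V := hViter w hw n
        have hstep := hlogstep _ hwn
        have hsucc : L (n+1) = Real.log ‖(H (H^[n] w)).2‖ := by
          rw [hL]; simp only; rw [Function.iterate_succ_apply']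
        have h1 : |L (n+1) - (d:ℝ) * L n| ≤ 1 := by
          rw [hsucc, abs_le]
          exact ⟨by linarith [hstep.1], by linarith [hstep.2]⟩
        have hd1n : (1:ℝ) ≤ (d:ℝ)^n := one_le_pow₀ hd1.le
        have habs : |(d:ℝ) * L n - (d:ℝ)^(n+1) * L 0| = (d:ℝ) * |L n - (d:ℝ)^n * L 0| := by
          rw [← abs_of_pos hd0, ← abs_mul]
          congr 1
          rw [abs_of_pos hd0]
          ring
        calc |L (n+1) - (d:ℝ)^(n+1) * L 0|
            ≤ |L (n+1) - (d:ℝ) * L n| + |(d:ℝ) * L n - (d:ℝ)^(n+1) * L 0| :=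
              abs_sub_le _ _ _
          _ ≤ 1 + (d:ℝ) * ((d:ℝ)^n - 1) := by
              rw [habs]
              have := mul_le_mul_of_nonneg_left ih hd0.le
              linarith
          _ ≤ (d:ℝ)^(n+1) - 1 := by
              rw [pow_succ]
              nlinarith
    have htend : Tendsto (fun n => L n / (d:ℝ)^n) atTop (𝓝 (G w)) := by
      apply (hGlim w).congr
      intro n
      rw [hnormV _ (hViter w hw n)]
    have hbound : ∀ n, |L n / (d:ℝ)^n - L 0| ≤ 1 := by
      intro n
      have hdn : (0:ℝ) < (d:ℝ)^n := by positivity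
      have heq : L n / (d:ℝ)^n - L 0 = (L n - (d:ℝ)^n * L 0) / (d:ℝ)^n := by
        field_simp
      rw [heq, abs_div, abs_of_pos hdn, div_le_one hdn]
      calc |L n - (d:ℝ)^n * L 0| ≤ (d:ℝ)^n - 1 := key n
        _ ≤ (d:ℝ)^n := by linarith
    have habs : Tendsto (fun n => |L n / (d:ℝ)^n - L 0|) atTop (𝓝 |G w - L 0|) :=
      ((htend.sub_const _).abs)
    exact le_of_tendsto habs (Eventually.of_forall hbound)
  -- G (H z) = d * G z
  have hGH : ∀ z : ℂ × ℂ, G (H z) = (d:ℝ) * G z := by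
    intro z
    have h1 := hGlim (H z)
    have h2 : Tendsto (fun n : ℕ => Real.log (max ‖H^[n+1] z‖ 1) / (d:ℝ)^(n+1)) atTop
        (𝓝 (G z)) := (hGlim z).comp (tendsto_add_atTop_nat 1)
    have h3 := h2.const_mul (d:ℝ)
    have heq : (fun n : ℕ => (d:ℝ) * (Real.log (max ‖H^[n+1] z‖ 1) / (d:ℝ)^(n+1)))
        = fun n : ℕ => Real.log (max ‖H^[n] (H z)‖ 1) / (d:ℝ)^n := by
      funext n
      rw [← Function.iterate_succ_apply, pow_succ]
      have hdn : ((d:ℝ)^n) ≠ 0 := by positivity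
      field_simp
    rw [heq] at h3
    exact tendsto_nhds_unique h1 h3
  have hGiter : ∀ (z : ℂ × ℂ) (n : ℕ), G (H^[n] z) = (d:ℝ)^n * G z := by
    intro z n
    induction n with
    | zero => simp
    | succ n ih =>
      rw [Function.iterate_succ_apply', hGH, ih, pow_succ]
      ring
  -- the inverse map
  set Hinv : ℂ × ℂ → ℂ × ℂ := fun w => ((p.eval w.1 - w.2)/a, w.1) with hHinvdef
  have hleft : ∀ w, Hinv (H w) = w := by
    intro w
    rw [hH]
    show ((p.eval w.2 - (p.eval w.2 - a * w.1))/a, w.2) = w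
    have : (p.eval w.2 - (p.eval w.2 - a * w.1))/a = w.1 := by
      field_simp
      ring
    rw [this]
  have hright : ∀ w, H (Hinv w) = w := by
    intro w
    rw [hH]
    show (w.1, p.eval w.1 - a * ((p.eval w.1 - w.2)/a)) = w
    have : p.eval w.1 - a * ((p.eval w.1 - w.2)/a) = w.2 := by
      field_simp
      ring
    rw [this]
  have hHinvcont : Continuous Hinv := by
    apply Continuous.prodMk
    · exact (((p.continuous_aeval).comp continuous_fst).sub continuous_snd).div_const a
    · exact continuous_fst
  have hri : ∀ (n : ℕ) (w : ℂ × ℂ), H^[n] (Hinv^[n] w) = w := by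
    intro n
    exact Function.LeftInverse.iterate hright n
  have hli : ∀ (n : ℕ) (w : ℂ × ℂ), Hinv^[n] (H^[n] w) = w := by
    intro n
    exact Function.LeftInverse.iterate hleft n
  -- escape to infinity
  have hbig : ∀ z : ℂ × ℂ, 0 < G z → ∀ M : ℝ, ∃ N : ℕ, ∀ n ≥ N, M < ‖H^[n] z‖ := by
    intro z hz M
    obtain ⟨B, hB⟩ : ∃ B, ∀ w ∈ Metric.closedBall (0 : ℂ × ℂ) M, G w ≤ B := by
      obtain ⟨B, hB⟩ := (isCompact_closedBall (0 : ℂ × ℂ) M).bddAbove_image hGcont.continuousOn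
      exact ⟨B, fun w hw => hB ⟨w, hw, rfl⟩⟩
    have htop : Tendsto (fun n : ℕ => (d:ℝ)^n * G z) atTop atTop :=
      (tendsto_pow_atTop_atTop_of_one_lt hd1).atTop_mul_const hz
    obtain ⟨N, hN⟩ := eventually_atTop.mp (htop.eventually_gt_atTop B)
    refine ⟨N, fun n hn => ?_⟩
    by_contra hcon
    push_neg at hcon
    have hmem : H^[n] z ∈ Metric.closedBall (0 : ℂ × ℂ) M := by
      rw [Metric.mem_closedBall, dist_zero_right]; exact hcon
    have h1 : G (H^[n] z) ≤ B := hB _ hmem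
    rw [hGiter z n] at h1
    exact absurd h1 (not_le.mpr (hN n hn))
  -- landing in V
  have hland : ∀ z : ℂ × ℂ, 0 < G z → ∀ N₀ : ℕ, ∃ n, N₀ ≤ n ∧ H^[n] z ∈ V := by
    intro z hz N₀
    obtain ⟨N, hN⟩ := hbig z hz R
    set N₁ := max N N₀ with hN₁
    by_contra hcon
    push_neg at hcon
    have hcon' : ∀ n, N₀ ≤ n → H^[n] z ∉ V := fun n hn h => (hcon n hn) h
    have hxy : ∀ n : ℕ, (H^[n+1] z).1 = (H^[n] z).2 := by
      intro n; rw [Function.iterate_succ_apply', hH]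
    have claim1 : ∀ n, N₁ ≤ n → R ≤ ‖(H^[n] z).2‖ ∧ ‖(H^[n] z).2‖ < ‖(H^[n] z).1‖ := by
      intro n hn
      have hnotV : H^[n] z ∉ V := hcon' n (le_trans (le_max_right _ _) hn)
      by_cases hcase : R ≤ ‖(H^[n] z).2‖
      · refine ⟨hcase, ?_⟩
        by_contra hle
        push_neg at hle
        exact hnotV ⟨hle, hcase⟩
      · push_neg at hcase
        exfalso
        have hnotV' : H^[n+1] z ∉ V := hcon' (n+1) (by omega)
        have hbig' : R < ‖H^[n+1] z‖ := hN (n+1) (by omega)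
        have hx' : ‖(H^[n+1] z).1‖ < R := by rw [hxy n]; exact hcase
        have hy' : R < ‖(H^[n+1] z).2‖ := by
          rw [Prod.norm_def] at hbig'
          rcases max_cases ‖(H^[n+1] z).1‖ ‖(H^[n+1] z).2‖ with ⟨h, _⟩ | ⟨h, _⟩ <;>
            rw [h] at hbig' <;> linarith
        exact hnotV' ⟨by linarith, hy'.le⟩
    have claim2 : ∀ n, N₁ ≤ n → ‖(H^[n] z).1‖ ≤ ‖(H^[N₁] z).1‖ := by
      intro n hn
      induction n, hn using Nat.le_induction with
      | base => exact le_refl _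
      | succ n hn ih =>
        have h1 := (claim1 n hn).2
        have h2 : ‖(H^[n+1] z).1‖ = ‖(H^[n] z).2‖ := by rw [hxy n]
        linarith
    obtain ⟨N2, hN2⟩ := hbig z hz ‖(H^[N₁] z).1‖
    set n := max N₁ N2 with hn
    have h1 := hN2 n (le_max_right _ _)
    have h2 := claim2 n (le_max_left _ _)
    have h3 := (claim1 n (le_max_left _ _)).2
    have h4 : ‖H^[n] z‖ ≤ ‖(H^[n] z).1‖ := by
      rw [Prod.norm_def]; exact max_le (le_refl _) h3.le
    linarith
  -- landing in V at a low level
  have hland2 : ∀ z : ℂ × ℂ, 0 < G z → G z < c → ∀ N₀ : ℕ,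
      ∃ n, N₀ ≤ n ∧ H^[n] z ∈ V ∧ Real.log ‖(H^[n] z).2‖ ≤ c * (d:ℝ)^n - 2 := by
    intro z hz hzc N₀
    have htop : Tendsto (fun n : ℕ => (d:ℝ)^n * (c - G z)) atTop atTop :=
      (tendsto_pow_atTop_atTop_of_one_lt hd1).atTop_mul_const (by linarith)
    obtain ⟨N₂, hN₂⟩ := eventually_atTop.mp (htop.eventually_ge_atTop 3)
    obtain ⟨n, hn, hnV⟩ := hland z hz (max N₀ N₂)
    refine ⟨n, le_trans (le_max_left _ _) hn, hnV, ?_⟩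
    have h3 : 3 ≤ (d:ℝ)^n * (c - G z) := hN₂ n (le_trans (le_max_right _ _) hn)
    have hGA' := abs_le.mp (hGA _ hnV)
    have hGn : G (H^[n] z) = (d:ℝ)^n * G z := hGiter z n
    have hlog1 : Real.log ‖(H^[n] z).2‖ ≤ G (H^[n] z) + 1 := by linarith [hGA'.1]
    rw [hGn] at hlog1
    nlinarith
  -- pushing low-level points forward
  have hWiter : ∀ w ∈ V, ∀ (n k : ℕ), Real.log ‖w.2‖ ≤ c * (d:ℝ)^n - 2 →
      (H^[k] w ∈ V ∧ Real.log ‖(H^[k] w).2‖ ≤ c * (d:ℝ)^(n+k) - 2) := by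
    intro w hw n k hwlog
    induction k with
    | zero => simpa using ⟨hw, hwlog⟩
    | succ k ih =>
      obtain ⟨ihV, ihlog⟩ := ih
      have hstep := (hlogstep _ ihV).2
      have hpow : (0:ℝ) < (d:ℝ)^(n+k) := by positivity
      constructor
      · rw [Function.iterate_succ_apply']; exact hVstep _ ihV
      · rw [Function.iterate_succ_apply']
        have hmul := mul_le_mul_of_nonneg_left ihlog hd0.le
        have heq : (d:ℝ) * (c * (d:ℝ)^(n+k)) = c * (d:ℝ)^(n+k+1) := by
          rw [pow_succ]; ring
        have hcd : 0 ≤ c * (d:ℝ)^(n+k) := by positivity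
        rw [show n + (k+1) = n + k + 1 by omega]
        calc Real.log ‖(H (H^[k] w)).2‖ ≤ (d:ℝ) * Real.log ‖(H^[k] w).2‖ + 1 := hstep
          _ ≤ (d:ℝ) * (c * (d:ℝ)^(n+k) - 2) + 1 := by linarith
          _ = c * (d:ℝ)^(n+k+1) - 2*(d:ℝ) + 1 := by rw [mul_sub, heq]; ring
          _ ≤ c * (d:ℝ)^(n+k+1) - 2 := by linarith
  -- bounds for G on V
  have hGlb : ∀ w ∈ V, Real.log ‖w.2‖ - 1 ≤ G w ∧ G w ≤ Real.log ‖w.2‖ + 1 := by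
    intro w hw
    have := abs_le.mp (hGA w hw)
    exact ⟨by linarith [this.2], by linarith [this.1]⟩
  have hGpos : ∀ w ∈ V, 1 ≤ G w := by
    intro w hw
    have h1 := (hGlb w hw).1
    have h2 : Real.log R ≤ Real.log ‖w.2‖ := Real.log_le_log hR0 hw.2
    linarith
  -- final assembly
  rw [isPathConnected_iff]
  constructor
  · -- nonempty
    have htop : Tendsto (fun n : ℕ => c * (d:ℝ)^n) atTop atTop :=
      (tendsto_pow_atTop_atTop_of_one_lt hd1).const_mul_atTop hc
    obtain ⟨N, hN⟩ := eventually_atTop.mp (htop.eventually_ge_atTop (Real.log R + 2))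
    have hnormR : ‖((R:ℂ))‖ = R := by
      rw [Complex.norm_real, Real.norm_eq_abs, abs_of_pos hR0]
    set w₀ : ℂ × ℂ := ((0:ℂ), (R:ℂ)) with hw₀
    have hw₀V : w₀ ∈ V := by
      constructor
      · show ‖(0:ℂ)‖ ≤ ‖((R:ℂ))‖; rw [norm_zero, hnormR]; linarith
      · show R ≤ ‖((R:ℂ))‖; rw [hnormR]
    have hw₀2 : Real.log ‖w₀.2‖ = Real.log R := by rw [hw₀]; simp only; rw [hnormR]
    set z₀ : ℂ × ℂ := Hinv^[N] w₀ with hz₀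
    have hGz₀ : G w₀ = (d:ℝ)^N * G z₀ := by
      rw [hz₀, ← hGiter (Hinv^[N] w₀) N, hri N w₀]
    have hpowN : (0:ℝ) < (d:ℝ)^N := by positivity
    have hGw₀pos : 1 ≤ G w₀ := hGpos _ hw₀V
    have hGw₀lt : G w₀ < c * (d:ℝ)^N := by
      have h1 := (hGlb _ hw₀V).2
      rw [hw₀2] at h1
      have h2 := hN N le_rfl
      linarith
    refine ⟨z₀, ?_, ?_⟩
    · nlinarith
    · nlinarith
  · -- joined pairs
    intro z hz z' hz'
    obtain ⟨hz1, hz2⟩ := hz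
    obtain ⟨hz1', hz2'⟩ := hz'
    obtain ⟨n, -, hnV, hnlog⟩ := hland2 z hz1 hz2 0
    obtain ⟨n', -, hnV', hnlog'⟩ := hland2 z' hz1' hz2' 0
    set m := max n n' with hm
    have h1 : H^[m] z ∈ V ∧ Real.log ‖(H^[m] z).2‖ ≤ c * (d:ℝ)^m - 2 := by
      have := hWiter _ hnV n (m - n) hnlog
      rw [← Function.iterate_add_apply, show m - n + n = m by omega,
        show n + (m - n) = m by omega] at this
      exact this
    have h2 : H^[m] z' ∈ V ∧ Real.log ‖(H^[m] z').2‖ ≤ c * (d:ℝ)^m - 2 := by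
      have := hWiter _ hnV' n' (m - n') hnlog'
      rw [← Function.iterate_add_apply, show m - n' + n' = m by omega,
        show n' + (m - n') = m by omega] at this
      exact this
    set T : ℝ := c * (d:ℝ)^m - 2 with hT
    have hlogRT : Real.log R ≤ T := by
      have ha1 : Real.log R ≤ Real.log ‖(H^[m] z).2‖ := Real.log_le_log hR0 h1.1.2
      linarith [h1.2]
    have hTW := stmt2_W_pathConnected R T hR1 hlogRT
    set S : Set (ℂ × ℂ) := {w : ℂ × ℂ | (‖w.1‖ ≤ ‖w.2‖ ∧ R ≤ ‖w.2‖) ∧ Real.log ‖w.2‖ ≤ T}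
      with hSdef
    have hj : JoinedIn S (H^[m] z) (H^[m] z') :=
      hTW.joinedIn _ ⟨h1.1, h1.2⟩ _ ⟨h2.1, h2.2⟩
    have hcont : Continuous (Hinv^[m]) := hHinvcont.iterate m
    have himg := stmt2_joinedIn_image hj hcont
    rw [hli m z, hli m z'] at himg
    apply himg.mono
    rintro u ⟨w, hwS, rfl⟩
    have hwV : w ∈ V := hwS.1
    have hGw1 : 1 ≤ G w := hGpos _ hwV
    have hGw2 : G w < c * (d:ℝ)^m := by
      have := (hGlb _ hwV).2
      have := hwS.2
      linarith [(hGlb _ hwV).2, hwS.2]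
    have hpowm : (0:ℝ) < (d:ℝ)^m := by positivity
    have hGu : G w = (d:ℝ)^m * G (Hinv^[m] w) := by
      rw [← hGiter (Hinv^[m] w) m, hri m w]
    constructor
    · show 0 < G (Hinv^[m] w)
      nlinarith
    · show G (Hinv^[m] w) < c
      nlinarith
end
end
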